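/- Let q be a prime power and A, B ⊆ F_q with B symmetric (B = -B) and |A||B| > q. Then 8AB = F_q, i.e., every element of F_q can be written as a sum of 8 products a·b with a ∈ A, b ∈ B. -/

import Mathlib

open Pointwise Finset

lemma cs_step {F : Type*} [DecidableEq F] (P : Finset (F × F)) (φ : F × F → F) :
    P.card ^ 2 ≤ (P.image φ).card *
      ((P ×ˢ P).filter (fun pp => φ pp.1 = φ pp.2)).card := by
  classical
  set S := P.image φ with hS
  have h1 : P.card = ∑ s ∈ S, (P.filter (fun p => φ p = s)).card :=
    card_eq_sum_card_fiberwise (fun p hp => mem_image_of_mem _ hp)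
  have h2 : ((P ×ˢ P).filter (fun pp => φ pp.1 = φ pp.2)).card
      = ∑ s ∈ S, (P.filter (fun p => φ p = s)).card ^ 2 := by
    have hmaps : ∀ pp ∈ (P ×ˢ P).filter (fun pp => φ pp.1 = φ pp.2), φ pp.1 ∈ S := by
      intro pp hpp
      simp only [mem_filter, mem_product] at hpp
      exact mem_image_of_mem _ hpp.1.1
    rw [card_eq_sum_card_fiberwise hmaps]
    refine Finset.sum_congr rfl (fun s _ => ?_)
    have : ((P ×ˢ P).filter (fun pp => φ pp.1 = φ pp.2)).filter (fun pp => φ pp.1 = s)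
        = (P.filter (fun p => φ p = s)) ×ˢ (P.filter (fun p => φ p = s)) := by
      ext pp
      simp only [mem_filter, mem_product]
      constructor
      · rintro ⟨⟨⟨hp1, hp2⟩, he⟩, hs⟩
        exact ⟨⟨hp1, hs⟩, hp2, he ▸ hs⟩
      · rintro ⟨⟨hp1, hs1⟩, hp2, hs2⟩
        exact ⟨⟨⟨hp1, hp2⟩, hs1.trans hs2.symm⟩, hs1⟩
    rw [this, card_product, sq]
  have cs : ((∑ s ∈ S, ((P.filter (fun p => φ p = s)).card : ℤ)) ^ 2)
      ≤ (S.card : ℤ) * ∑ s ∈ S, ((P.filter (fun p => φ p = s)).card : ℤ) ^ 2 :=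
    sq_sum_le_card_mul_sum_sq
  rw [h1, h2]
  exact_mod_cast cs

set_option maxHeartbeats 1600000 in
lemma key_lemma {F : Type*} [Field F] [Fintype F] [DecidableEq F] (Af Bf : Finset F)
    (h : Fintype.card F < Af.card * Bf.card) :
    ∃ ξ : F, ξ ≠ 0 ∧
      Fintype.card F < 2 * ((Af ×ˢ Bf).image (fun p => p.1 + ξ * p.2)).card := by
  by_contra hc
  push_neg at hc
  set q := Fintype.card F with hq
  set P := Af ×ˢ Bf with hP
  have hPcard : P.card = Af.card * Bf.card := card_product _ _
  -- Step A
  have stepA : ∀ ξ : F, ξ ≠ 0 →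
      2 * (Af.card * Bf.card) ^ 2 ≤ q * (Af.card * Bf.card +
        ((P ×ˢ P).filter (fun pp => pp.1.2 ≠ pp.2.2 ∧
          pp.1.1 + ξ * pp.1.2 = pp.2.1 + ξ * pp.2.2)).card) := by
    intro ξ hξ
    have cs := cs_step P (fun p => p.1 + ξ * p.2)
    set C := ((P ×ˢ P).filter (fun pp => pp.1.1 + ξ * pp.1.2 = pp.2.1 + ξ * pp.2.2)) with hC
    set nξ := ((P ×ˢ P).filter (fun pp => pp.1.2 ≠ pp.2.2 ∧
          pp.1.1 + ξ * pp.1.2 = pp.2.1 + ξ * pp.2.2)).card with hnξ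
    have hsplit : C.card ≤ Af.card * Bf.card + nξ := by
      have hdec := Finset.card_filter_add_card_filter_not
        (s := C) (p := fun pp => pp.1.2 = pp.2.2)
      have h1 : (C.filter (fun pp => pp.1.2 = pp.2.2)).card ≤ Af.card * Bf.card := by
        rw [← hPcard]
        apply Finset.card_le_card_of_injOn (fun pp => pp.1)
        · intro pp hpp
          simp only [Finset.mem_coe, hC, mem_filter, mem_product] at hpp
          exact hpp.1.1.1
        · intro pp hpp qq hqq hpq
          simp only [Finset.mem_coe, hC, mem_filter, mem_product] at hpp hqq
          have hpq' : pp.1 = qq.1 := hpq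
          have e1 : pp.2 = pp.1 := by
            have hb : pp.1.2 = pp.2.2 := hpp.2
            have ha : pp.1.1 = pp.2.1 := by
              have h' := hpp.1.2
              rw [← hb] at h'
              exact add_right_cancel h'
            exact Prod.ext ha.symm hb.symm
          have e2 : qq.2 = qq.1 := by
            have hb : qq.1.2 = qq.2.2 := hqq.2
            have ha : qq.1.1 = qq.2.1 := by
              have h' := hqq.1.2
              rw [← hb] at h'
              exact add_right_cancel h'
            exact Prod.ext ha.symm hb.symm
          calc pp = (pp.1, pp.2) := rfl
            _ = (qq.1, qq.2) := by rw [e1, e2, hpq']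
            _ = qq := rfl
      have h2 : (C.filter (fun pp => ¬ pp.1.2 = pp.2.2)).card = nξ := by
        rw [hnξ]
        congr 1
        rw [hC, Finset.filter_filter]
        apply Finset.filter_congr
        intro pp _
        constructor
        · rintro ⟨h1', h2'⟩; exact ⟨h2', h1'⟩
        · rintro ⟨h1', h2'⟩; exact ⟨h2', h1'⟩
      omega
    have himg : 2 * ((P.image (fun p => p.1 + ξ * p.2)).card) ≤ q := hc ξ hξ
    calc 2 * (Af.card * Bf.card) ^ 2 = 2 * P.card ^ 2 := by rw [hPcard]
      _ ≤ 2 * ((P.image (fun p => p.1 + ξ * p.2)).card * C.card) :=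
          Nat.mul_le_mul_left _ cs
      _ = (2 * (P.image (fun p => p.1 + ξ * p.2)).card) * C.card := by ring
      _ ≤ q * C.card := Nat.mul_le_mul_right _ himg
      _ ≤ q * (Af.card * Bf.card + nξ) := Nat.mul_le_mul_left _ hsplit
  -- Step B : sum over ξ ≠ 0 of the off-diagonal collision counts
  have stepB : ∑ ξ ∈ Finset.univ.erase (0 : F),
      ((P ×ˢ P).filter (fun pp => pp.1.2 ≠ pp.2.2 ∧
        pp.1.1 + ξ * pp.1.2 = pp.2.1 + ξ * pp.2.2)).card
      = Af.offDiag.card * Bf.offDiag.card := by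
    have hcard : (Af.offDiag ×ˢ Bf.offDiag).card = Af.offDiag.card * Bf.offDiag.card :=
      card_product _ _
    rw [← hcard]
    have hmaps : ∀ z ∈ Af.offDiag ×ˢ Bf.offDiag,
        (z.1.1 - z.1.2) / (z.2.2 - z.2.1) ∈ Finset.univ.erase (0 : F) := by
      intro z hz
      simp only [mem_product, Finset.mem_offDiag] at hz
      refine Finset.mem_erase.2 ⟨?_, Finset.mem_univ _⟩
      exact div_ne_zero (sub_ne_zero.2 hz.1.2.2) (sub_ne_zero.2 (Ne.symm hz.2.2.2))
    rw [card_eq_sum_card_fiberwise hmaps]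
    refine Finset.sum_congr rfl (fun ξ hξ => ?_)
    have hξ0 : ξ ≠ 0 := (Finset.mem_erase.1 hξ).1
    symm
    apply Finset.card_nbij' (fun z => ((z.1.1, z.2.1), (z.1.2, z.2.2)))
      (fun pp => ((pp.1.1, pp.2.1), (pp.1.2, pp.2.2)))
    · intro z hz
      simp only [Finset.mem_coe, mem_filter, mem_product, Finset.mem_offDiag] at hz
      obtain ⟨⟨⟨ha1, ha2, hane⟩, ⟨hb1, hb2, hbne⟩⟩, hdiv⟩ := hz
      have hbne' : z.2.2 - z.2.1 ≠ 0 := sub_ne_zero.2 (Ne.symm hbne)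
      have heq : z.1.1 - z.1.2 = ξ * (z.2.2 - z.2.1) := (div_eq_iff hbne').1 hdiv
      simp only [Finset.mem_coe, hP, mem_filter, mem_product]
      refine ⟨⟨⟨ha1, hb1⟩, ⟨ha2, hb2⟩⟩, hbne, ?_⟩
      linear_combination heq
    · intro pp hpp
      simp only [Finset.mem_coe, hP, mem_filter, mem_product] at hpp
      obtain ⟨⟨⟨ha1, hb1⟩, ⟨ha2, hb2⟩⟩, hbne, heq⟩ := hpp
      have hd : pp.2.2 - pp.1.2 ≠ 0 := sub_ne_zero.2 (Ne.symm hbne)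
      have hnum : pp.1.1 - pp.2.1 = ξ * (pp.2.2 - pp.1.2) := by linear_combination heq
      have hane : pp.1.1 ≠ pp.2.1 := by
        intro hcon
        have hz0 : ξ * (pp.2.2 - pp.1.2) = 0 := by rw [← hnum, hcon, sub_self]
        rcases mul_eq_zero.1 hz0 with h' | h'
        · exact hξ0 h'
        · exact hd h'
      simp only [Finset.mem_coe, mem_filter, mem_product, Finset.mem_offDiag]
      refine ⟨⟨⟨ha1, ha2, hane⟩, ⟨hb1, hb2, hbne⟩⟩, ?_⟩
      rw [div_eq_iff hd]
      exact hnum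
    · intro z hz; rfl
    · intro pp hpp; rfl
  -- Step C : sum Step A over all nonzero ξ
  have hqcard : (Finset.univ.erase (0 : F)).card = q - 1 := by
    rw [Finset.card_erase_of_mem (Finset.mem_univ _), Finset.card_univ]
  have stepC : (q - 1) * (2 * (Af.card * Bf.card) ^ 2)
      ≤ q * ((q - 1) * (Af.card * Bf.card) + Af.offDiag.card * Bf.offDiag.card) := by
    calc (q - 1) * (2 * (Af.card * Bf.card) ^ 2)
        = ∑ _ξ ∈ Finset.univ.erase (0 : F), 2 * (Af.card * Bf.card) ^ 2 := by
          rw [Finset.sum_const, hqcard, smul_eq_mul]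
      _ ≤ ∑ ξ ∈ Finset.univ.erase (0 : F), q * (Af.card * Bf.card +
            ((P ×ˢ P).filter (fun pp => pp.1.2 ≠ pp.2.2 ∧
              pp.1.1 + ξ * pp.1.2 = pp.2.1 + ξ * pp.2.2)).card) := by
          apply Finset.sum_le_sum
          intro ξ hξ
          exact stepA ξ (Finset.mem_erase.1 hξ).1
      _ = q * ((q - 1) * (Af.card * Bf.card) + Af.offDiag.card * Bf.offDiag.card) := by
          rw [← Finset.mul_sum, Finset.sum_add_distrib, Finset.sum_const, hqcard,
            smul_eq_mul, stepB]
  -- Step D : numeric contradiction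
  have hq2 : 2 ≤ q := Fintype.one_lt_card
  have haq : Af.card ≤ q := by rw [hq, ← Finset.card_univ]; exact Finset.card_le_univ _
  have hbq : Bf.card ≤ q := by rw [hq, ← Finset.card_univ]; exact Finset.card_le_univ _
  have hoA : Af.offDiag.card = Af.card * Af.card - Af.card := Finset.offDiag_card _
  have hoB : Bf.offDiag.card = Bf.card * Bf.card - Bf.card := Finset.offDiag_card _
  rw [hoA, hoB] at stepC
  -- cast to ℤ
  have haA : Af.card ≤ Af.card * Af.card := by
    rcases Nat.eq_zero_or_pos Af.card with h0 | h0
    · simp [h0]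
    · exact Nat.le_mul_of_pos_left _ h0
  have haB : Bf.card ≤ Bf.card * Bf.card := by
    rcases Nat.eq_zero_or_pos Bf.card with h0 | h0
    · simp [h0]
    · exact Nat.le_mul_of_pos_left _ h0
  zify [haA, haB, Nat.one_le_iff_ne_zero.2 (by omega : q ≠ 0)] at stepC
  obtain ⟨a, b, Q, ha', hb', hQ'⟩ :
      ∃ a b Q : ℤ, a = (Af.card : ℤ) ∧ b = (Bf.card : ℤ) ∧ Q = (q : ℤ) :=
    ⟨_, _, _, rfl, rfl, rfl⟩
  rw [← ha', ← hb', ← hQ'] at stepC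
  have hab : Q + 1 ≤ a * b := by
    rw [ha', hb', hQ']
    have h2 : q + 1 ≤ Af.card * Bf.card := h
    exact_mod_cast h2
  have hQ2' : (2 : ℤ) ≤ Q := by rw [hQ']; exact_mod_cast hq2
  have haq' : a ≤ Q := by rw [ha', hQ']; exact_mod_cast haq
  have hbq' : b ≤ Q := by rw [hb', hQ']; exact_mod_cast hbq
  have ha0 : (0 : ℤ) ≤ a := by rw [ha']; positivity
  have hb0 : (0 : ℤ) ≤ b := by rw [hb']; positivity
  have hM : (0 : ℤ) < a * b := by nlinarith
  have key2 : 2 * (a * b) * (Q - 1) ≤ Q * (Q + a * b - a - b) := by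
    apply le_of_mul_le_mul_right _ hM
    have e1 : (2 * (a * b) * (Q - 1)) * (a * b) = (Q - 1) * (2 * (a * b) ^ 2) := by ring
    have e2 : (Q * (Q + a * b - a - b)) * (a * b)
        = Q * ((Q - 1) * (a * b) + (a * a - a) * (b * b - b)) := by ring
    rw [e1, e2]
    exact stepC
  have p1 : Q * (Q + 1) ≤ Q * (a * b) :=
    mul_le_mul_of_nonneg_left hab (by linarith)
  have p2 : a * b ≤ Q * b := mul_le_mul_of_nonneg_right haq' hb0
  have p3 : a * b ≤ a * Q := mul_le_mul_of_nonneg_left hbq' ha0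
  nlinarith [key2, p1, p2, p3]

theorem stmt_12 {F : Type*} [Field F] [Fintype F]
    (A B : Set F) (hB : B = -B)
    (h : A.ncard * B.ncard > Fintype.card F) :
    ∀ x : F, ∃ a : Fin 8 → F, ∃ b : Fin 8 → F,
      (∀ i, a i ∈ A ∧ b i ∈ B) ∧ x = ∑ i, a i * b i := by
  classical
  intro x
  have hAfin : A.Finite := Set.toFinite A
  have hBfin : B.Finite := Set.toFinite B
  set Af := hAfin.toFinset with hAf
  set Bf := hBfin.toFinset with hBf
  have hmemA : ∀ t, t ∈ Af ↔ t ∈ A := fun t => Set.Finite.mem_toFinset _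
  have hmemB : ∀ t, t ∈ Bf ↔ t ∈ B := fun t => Set.Finite.mem_toFinset _
  have hnegB : ∀ t, t ∈ B → -t ∈ B := by
    intro t ht
    rw [hB]
    simpa using ht
  have hcard : Fintype.card F < Af.card * Bf.card := by
    rwa [← Set.ncard_eq_toFinset_card A hAfin, ← Set.ncard_eq_toFinset_card B hBfin]
  obtain ⟨ξ, hξ0, hbig⟩ := key_lemma Af Bf hcard
  -- collision: a1 - a2 = ξ * (b1 - b2) with b1 ≠ b2
  obtain ⟨p, hp, p', hp', hne, hcoll⟩ :
      ∃ p ∈ Af ×ˢ Bf, ∃ p' ∈ Af ×ˢ Bf, p ≠ p' ∧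
        p.1 - ξ * p.2 = p'.1 - ξ * p'.2 := by
    apply Finset.exists_ne_map_eq_of_card_lt_of_maps_to
    · rw [Finset.card_univ, Finset.card_product]; exact hcard
    · intro p _; exact Finset.mem_univ _
  rw [Finset.mem_product] at hp hp'
  obtain ⟨ha1, hb1⟩ := hp
  obtain ⟨ha2, hb2⟩ := hp'
  have hv : p.1 - p'.1 = ξ * (p.2 - p'.2) := by linear_combination hcoll
  have hd0 : p.2 - p'.2 ≠ 0 := by
    intro hcon
    have hb : p.2 = p'.2 := by linear_combination hcon
    have ha : p.1 = p'.1 := by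
      have := hv
      rw [hcon, mul_zero] at this
      linear_combination this
    exact hne (Prod.ext ha hb)
  -- the large set S = (b1-b2)·(A + ξB) ⊆ 4AB and its reflection
  set S0 := (Af ×ˢ Bf).image (fun r => r.1 + ξ * r.2) with hS0
  set S := S0.image (fun s => (p.2 - p'.2) * s) with hS
  set T := S.image (fun s => x - s) with hT
  have hcardS : S.card = S0.card :=
    Finset.card_image_of_injective _ (mul_right_injective₀ hd0)
  have hcardT : T.card = S.card :=
    Finset.card_image_of_injective _ sub_right_injective
  have hinter : (S ∩ T).Nonempty := by
    rw [← Finset.card_pos]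
    have hu := Finset.card_union_add_card_inter S T
    have hle : (S ∪ T).card ≤ Fintype.card F := by
      rw [← Finset.card_univ]; exact Finset.card_le_univ _
    have h2S : Fintype.card F < S.card + T.card := by
      rw [hcardT, hcardS]
      omega
    omega
  obtain ⟨y, hy⟩ := hinter
  rw [Finset.mem_inter] at hy
  obtain ⟨hyS, hyT⟩ := hy
  rw [hS, Finset.mem_image] at hyS
  obtain ⟨s3, hs3, hy3⟩ := hyS
  rw [hS0, Finset.mem_image] at hs3
  obtain ⟨r3, hr3, hs3e⟩ := hs3
  rw [Finset.mem_product] at hr3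
  rw [hT, Finset.mem_image] at hyT
  obtain ⟨y', hy', hy'e⟩ := hyT
  rw [hS, Finset.mem_image] at hy'
  obtain ⟨s4, hs4, hy4⟩ := hy'
  rw [hS0, Finset.mem_image] at hs4
  obtain ⟨r4, hr4, hs4e⟩ := hs4
  rw [Finset.mem_product] at hr4
  -- now x = y + y' with y = (b1-b2)(a3+ξb3), y' = (b1-b2)(a4+ξb4)
  have hx : x = (p.2 - p'.2) * (r3.1 + ξ * r3.2) + (p.2 - p'.2) * (r4.1 + ξ * r4.2) := by
    have h1 : y = (p.2 - p'.2) * (r3.1 + ξ * r3.2) := by rw [← hs3e] at hy3; exact hy3.symm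
    have h2 : y' = (p.2 - p'.2) * (r4.1 + ξ * r4.2) := by rw [← hs4e] at hy4; exact hy4.symm
    have h3 : y = x - y' := hy'e.symm
    rw [← h1, ← h2]
    linear_combination -h3
  refine ⟨![r3.1, r3.1, p.1, p'.1, r4.1, r4.1, p.1, p'.1],
    ![p.2, -p'.2, r3.2, -r3.2, p.2, -p'.2, r4.2, -r4.2], ?_, ?_⟩
  · intro i
    fin_cases i <;> refine ⟨?_, ?_⟩ <;>
      first
        | exact (hmemA _).1 hr3.1
        | exact (hmemA _).1 hr4.1
        | exact (hmemA _).1 ha1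
        | exact (hmemA _).1 ha2
        | exact (hmemB _).1 hb1
        | exact (hmemB _).1 hr3.2
        | exact (hmemB _).1 hr4.2
        | exact hnegB _ ((hmemB _).1 hb2)
        | exact hnegB _ ((hmemB _).1 hr3.2)
        | exact hnegB _ ((hmemB _).1 hr4.2)
  · have hfin : x = r3.1 * p.2 + r3.1 * (-p'.2) + p.1 * r3.2 + p'.1 * (-r3.2)
        + r4.1 * p.2 + r4.1 * (-p'.2) + p.1 * r4.2 + p'.1 * (-r4.2) := by
      linear_combination hx - (r3.2 + r4.2) * hv
    rw [Fin.sum_univ_eight]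
    exact hfin
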